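/- arXiv:2107.05903 — 3 statements merged into one kernel-verified Lean document; each statement's English description precedes it below -/
import Mathlib

section
/- Let (P, ≤) be a poset, (Y, ≤) a complete inf-semilattice, X ⊂ P a subset, and Φ : P → Y an order-preserving map. Suppose the greatest lower bound ⋀_{x∈X} x exists in P, and there is a sequence (x_n) in X whose infimum exists in P and equals ⋀_{x∈X} x, such that the nonincreasing sequence x'_n = ⋀_{k≤n} x_k satisfies ⋀_n Φ(x'_n) ≤ Φ(⋀_{x∈X} x). Then ⋀_{x∈X} Φ(x) = Φ(⋀_{x∈X} x) holds if and only if X is Φ-inf-directed, i.e. for every finite subset X̃ ⊂ X one has ⋀_{x∈X} Φ(x) ≤ Φ(⋀_{x∈X̃} x). -/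
/-- Minimization Interchange Theorem on posets. -/
theorem minimization_interchange {P Y : Type*} [PartialOrder P] [CompleteSemilatticeInf Y]
    (X : Set P) (Φ : P → Y) (hΦ : Monotone Φ)
    (xstar : P) (hglb : IsGLB X xstar)
    (x : ℕ → P) (hxX : ∀ n, x n ∈ X)
    (hseq : IsGLB (Set.range x) xstar)
    (x' : ℕ → P) (hx' : ∀ n, IsGLB {y | ∃ k ≤ n, y = x k} (x' n))
    (hFatou : sInf (Set.range fun n => Φ (x' n)) ≤ Φ xstar) :
    sInf (Φ '' X) = Φ xstar ↔
      ∀ F : Finset P, (F : Set P).Nonempty → ↑F ⊆ X →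
        ∀ m : P, IsGLB (F : Set P) m → sInf (Φ '' X) ≤ Φ m := by
  have hlow : Φ xstar ≤ sInf (Φ '' X) := by
    apply le_sInf
    rintro y ⟨a, haX, rfl⟩
    exact hΦ (hglb.1 haX)
  constructor
  · intro h F hFne hFX m hm
    rw [h]
    exact hΦ (hm.2 fun a ha => hglb.1 (hFX ha))
  · intro h
    apply le_antisymm _ hlow
    calc sInf (Φ '' X) ≤ sInf (Set.range fun n => Φ (x' n)) := by
          apply le_sInf
          rintro y ⟨n, rfl⟩
          classical
          have hset : ↑((Finset.range (n+1)).image x) = {y | ∃ k ≤ n, y = x k} := by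
            ext a
            simp [Nat.lt_succ_iff, eq_comm]
          apply h ((Finset.range (n+1)).image x)
          · rw [hset]; exact ⟨x 0, 0, Nat.zero_le n, rfl⟩
          · rw [hset]; rintro a ⟨k, _, rfl⟩; exact hxX k
          · rw [hset]; exact hx' n
      _ ≤ Φ xstar := hFatou
end

section
/- Let (Ω, F, μ) be a σ-finite measure space and X a subset of L¹_⊕(Ω, F, μ; ℝ̄) (equivalence classes of measurable extended-real functions with integrable positive part). Then the essential infimum ess inf_{x∈X} x belongs to L¹_⊕, and the equality inf_{x∈X} ∫_Ω x dμ = ∫_Ω (ess inf_{x∈X} x) dμ holds if and only if X is integrably inf-directed, i.e. for every finite family x₁,…,x_n in X, inf_{x∈X} ∫_Ω x dμ ≤ ∫_Ω min_{1≤i≤n} x_i dμ. -/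
open MeasureTheory Filter Topology ENNReal

noncomputable section

/-- The nonnegative part of an extended real number, as an element of `ℝ≥0∞`. -/
def EReal.posE (x : EReal) : ℝ≥0∞ := if x = ⊤ then ⊤ else ENNReal.ofReal x.toReal

variable {Ω : Type*} [MeasurableSpace Ω]

/-- The extended Lebesgue integral of an extended-real-valued function:
`∫ f₊ dμ − ∫ f₋ dμ` (meaningful when one of the two parts is finite). -/
def extInt (μ : Measure Ω) (f : Ω → EReal) : EReal :=
  ((∫⁻ ω, (f ω).posE ∂μ : ℝ≥0∞) : EReal) - ((∫⁻ ω, (-(f ω)).posE ∂μ : ℝ≥0∞) : EReal)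

/-- The outer integral: infimum of integrals of real-valued integrable a.e. majorants. -/
def outerInt (μ : Measure Ω) (f : Ω → EReal) : EReal :=
  sInf { y : EReal | ∃ ψ : Ω → ℝ, Integrable ψ μ ∧ (∀ᵐ ω ∂μ, f ω ≤ (ψ ω : EReal)) ∧
    y = ((∫ ω, ψ ω ∂μ : ℝ) : EReal) }

/-- The inner integral: supremum of integrals of real-valued integrable a.e. minorants. -/
def innerInt (μ : Measure Ω) (f : Ω → EReal) : EReal :=
  sSup { y : EReal | ∃ ψ : Ω → ℝ, Integrable ψ μ ∧ (∀ᵐ ω ∂μ, (ψ ω : EReal) ≤ f ω) ∧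
    y = ((∫ ω, ψ ω ∂μ : ℝ) : EReal) }

/-- Extended addition on `ℝ̄` for which `+∞` is absorbing. -/
def upperAdd (a b : EReal) : EReal := if a = ⊤ ∨ b = ⊤ then ⊤ else a + b

lemma coe_posE (x : EReal) : (x.posE : EReal) = x ⊔ 0 := by
  induction x with
  | bot => simp [EReal.posE]
  | coe r =>
    simp only [EReal.posE, EReal.coe_ne_top, if_false, EReal.toReal_coe,
      EReal.coe_ennreal_ofReal]
    rw [EReal.coe_strictMono.monotone.map_max]
    norm_cast
  | top => simp [EReal.posE]

lemma posE_mono : Monotone EReal.posE := by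
  intro x y h
  rw [← EReal.coe_ennreal_le_coe_ennreal_iff, coe_posE, coe_posE]
  exact sup_le_sup_right h 0

lemma posE_le_iff {x : EReal} {a : ℝ≥0∞} : x.posE ≤ a ↔ x ≤ (a : EReal) := by
  rw [← EReal.coe_ennreal_le_coe_ennreal_iff, coe_posE, sup_le_iff]
  simp [EReal.coe_ennreal_nonneg]

lemma le_posE_iff {x : EReal} {a : ℝ≥0∞} (ha : a ≠ 0) : a ≤ x.posE ↔ (a : EReal) ≤ x := by
  rw [← EReal.coe_ennreal_le_coe_ennreal_iff, coe_posE, le_sup_iff]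
  constructor
  · rintro (h | h)
    · exact h
    · exact absurd ((EReal.coe_ennreal_eq_zero).mp (le_antisymm h (EReal.coe_ennreal_nonneg a))) ha
  · exact Or.inl

lemma posE_iInf {ι : Sort*} [Nonempty ι] (x : ι → EReal) :
    (⨅ i, x i).posE = ⨅ i, (x i).posE := by
  refine le_antisymm (le_iInf fun i => posE_mono (iInf_le _ i)) ?_
  rcases eq_or_ne (⨅ i, (x i).posE) 0 with h | h
  · simp [h]
  · rw [le_posE_iff h]
    exact le_iInf fun i => (le_posE_iff h).mp (iInf_le _ i)

lemma posE_iSup {ι : Sort*} [Nonempty ι] (x : ι → EReal) :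
    (⨆ i, x i).posE = ⨆ i, (x i).posE := by
  refine le_antisymm ?_ (iSup_le fun i => posE_mono (le_iSup _ i))
  rw [posE_le_iff]
  exact iSup_le fun i => posE_le_iff.mp (le_iSup (fun i => (x i).posE) i)

lemma ereal_neg_iInf {ι : Sort*} (x : ι → EReal) : -(⨅ i, x i) = ⨆ i, -(x i) := by
  refine le_antisymm ?_ (iSup_le fun i => EReal.neg_le_neg_iff.mpr (iInf_le _ i))
  rw [EReal.neg_le]
  exact le_iInf fun i => by
    rw [← EReal.neg_le_neg_iff, neg_neg]
    exact le_iSup (fun i => -(x i)) i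

lemma measurable_posE : Measurable EReal.posE := by
  unfold EReal.posE
  exact Measurable.ite (measurableSet_singleton _) measurable_const
    (ENNReal.measurable_ofReal.comp measurable_ereal_toReal)

lemma extInt_mono_ae {μ : Measure Ω} {f g : Ω → EReal} (h : f ≤ᵐ[μ] g) :
    extInt μ f ≤ extInt μ g := by
  refine EReal.sub_le_sub ?_ ?_
  · exact EReal.coe_ennreal_le_coe_ennreal_iff.mpr <|
      lintegral_mono_ae (h.mono fun ω hω => posE_mono hω)
  · exact EReal.coe_ennreal_le_coe_ennreal_iff.mpr <|
      lintegral_mono_ae (h.mono fun ω hω => posE_mono (EReal.neg_le_neg_iff.mpr hω))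

lemma extInt_congr_ae {μ : Measure Ω} {f g : Ω → EReal} (h : f =ᵐ[μ] g) :
    extInt μ f = extInt μ g :=
  le_antisymm (extInt_mono_ae h.le) (extInt_mono_ae h.symm.le)

lemma iInf_extInt_le (μ : Measure Ω) (h : ℕ → Ω → EReal) (hmeas : ∀ n, Measurable (h n))
    (hanti : Antitone h) (hfin : (∫⁻ ω, (h 0 ω).posE ∂μ) ≠ ⊤) :
    ⨅ n, extInt μ (h n) ≤ extInt μ (fun ω => ⨅ n, h n ω) := by
  set a : ℕ → ℝ≥0∞ := fun n => ∫⁻ ω, (h n ω).posE ∂μ with ha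
  set b : ℕ → ℝ≥0∞ := fun n => ∫⁻ ω, (-(h n ω)).posE ∂μ with hb
  have haanti : Antitone a := fun n m hnm =>
    lintegral_mono fun ω => posE_mono (hanti hnm ω)
  have hbmono : Monotone b := fun n m hnm =>
    lintegral_mono fun ω => posE_mono (EReal.neg_le_neg_iff.mpr (hanti hnm ω))
  have hA : (∫⁻ ω, ((⨅ n, h n ω)).posE ∂μ) = ⨅ n, a n := by
    rw [show (fun ω => ((⨅ n, h n ω)).posE) = fun ω => ⨅ n, (h n ω).posE from
      funext fun ω => posE_iInf _]
    exact lintegral_iInf (fun n => measurable_posE.comp (hmeas n))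
      (fun n m hnm ω => posE_mono (hanti hnm ω)) hfin
  have hB : (∫⁻ ω, (-(⨅ n, h n ω)).posE ∂μ) = ⨆ n, b n := by
    rw [show (fun ω => (-(⨅ n, h n ω)).posE) = fun ω => ⨆ n, (-(h n ω)).posE from
      funext fun ω => by rw [ereal_neg_iInf]; exact posE_iSup _]
    exact lintegral_iSup (fun n => measurable_posE.comp (hmeas n).neg)
      (fun n m hnm ω => posE_mono (EReal.neg_le_neg_iff.mpr (hanti hnm ω)))
  have hAfin : (⨅ n, a n) ≠ ⊤ := fun hc => hfin (by
    have := iInf_le a 0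
    rw [hc] at this
    exact top_le_iff.mp this)
  -- limit argument
  have ta : Tendsto (fun n => ((a n : EReal))) atTop (𝓝 ((⨅ n, a n : ℝ≥0∞) : EReal)) :=
    (continuous_coe_ennreal_ereal.tendsto _).comp (tendsto_atTop_iInf haanti)
  have tb : Tendsto (fun n => -((b n : ℝ≥0∞) : EReal)) atTop (𝓝 (-((⨆ n, b n : ℝ≥0∞) : EReal))) :=
    ((continuous_neg (G := EReal)).tendsto _).comp
      ((continuous_coe_ennreal_ereal.tendsto _).comp (tendsto_atTop_iSup hbmono))
  have tsum : Tendsto (fun n => extInt μ (h n)) atTop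
      (𝓝 (((⨅ n, a n : ℝ≥0∞) : EReal) - ((⨆ n, b n : ℝ≥0∞) : EReal))) := by
    have hc : ContinuousAt (fun p : EReal × EReal => p.1 + p.2)
        (((⨅ n, a n : ℝ≥0∞) : EReal), -((⨆ n, b n : ℝ≥0∞) : EReal)) := by
      refine EReal.continuousAt_add (Or.inl ?_) (Or.inl ?_)
      · simpa using hAfin
      · exact (EReal.bot_lt_coe_ennreal _).ne'
    exact (hc.tendsto.comp (ta.prodMk_nhds tb))
  have hrhs : extInt μ (fun ω => ⨅ n, h n ω)
      = ((⨅ n, a n : ℝ≥0∞) : EReal) - ((⨆ n, b n : ℝ≥0∞) : EReal) := by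
    simp only [extInt]
    rw [hA, hB]
  rw [hrhs]
  exact ge_of_tendsto tsum (Eventually.of_forall fun n => iInf_le _ n)

def phiE (x : EReal) : ℝ := if x = ⊤ then 2 else if x = ⊥ then -2 else Real.arctan x.toReal

lemma phiE_abs_le (x : EReal) : |phiE x| ≤ 2 := by
  have h2 : Real.pi / 2 < 2 := by have := Real.pi_lt_d2; linarith
  unfold phiE
  split_ifs with h1 h3
  · simp
  · simp
  · rw [abs_le]
    constructor
    · nlinarith [Real.neg_pi_div_two_lt_arctan x.toReal]
    · nlinarith [Real.arctan_lt_pi_div_two x.toReal]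

lemma phiE_strictMono : StrictMono phiE := by
  have h2 : Real.pi / 2 < 2 := by have := Real.pi_lt_d2; linarith
  have harc : ∀ t : ℝ, -2 < Real.arctan t ∧ Real.arctan t < 2 := fun t =>
    ⟨by nlinarith [Real.neg_pi_div_two_lt_arctan t], by nlinarith [Real.arctan_lt_pi_div_two t]⟩
  intro x y hxy
  induction x with
  | bot =>
    induction y with
    | bot => exact absurd hxy (lt_irrefl _)
    | coe r =>
      simp only [phiE, EReal.coe_ne_top, if_false, if_neg (EReal.coe_ne_bot r), if_pos rfl]
      exact (harc _).1
    | top => simp [phiE]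
  | coe r =>
    induction y with
    | bot => exact absurd hxy (by simp)
    | coe s =>
      simp only [phiE, EReal.coe_ne_top, if_false, if_neg (EReal.coe_ne_bot _),
        EReal.toReal_coe]
      exact Real.arctan_strictMono (EReal.coe_lt_coe_iff.mp hxy)
    | top =>
      simp only [phiE, EReal.coe_ne_top, if_false, if_neg (EReal.coe_ne_bot _), if_pos rfl,
        EReal.toReal_coe]
      exact (harc _).2
  | top => exact absurd hxy (by simp)

lemma phiE_measurable : Measurable phiE := by
  unfold phiE
  refine Measurable.ite (measurableSet_singleton _) measurable_const ?_
  exact Measurable.ite (measurableSet_singleton _) measurable_const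
    (Real.continuous_arctan.measurable.comp measurable_ereal_toReal)

lemma exists_seq_ae_lb (ν : Measure Ω) [IsFiniteMeasure ν] (X : Set (Ω → EReal))
    (f₀ : Ω → EReal) (hf₀ : f₀ ∈ X) (hmeas : ∀ f ∈ X, Measurable f) :
    ∃ D : ℕ → Ω → EReal, (∀ n, D n ∈ X) ∧
      ∀ f ∈ X, (fun ω => ⨅ n, D n ω) ≤ᵐ[ν] f := by
  have hint : ∀ w : Ω → EReal, Measurable w → Integrable (fun ω => phiE (w ω)) ν := by
    intro w hw
    refine ⟨((phiE_measurable.comp hw)).aestronglyMeasurable, ?_⟩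
    exact HasFiniteIntegral.of_bounded (C := 2) (Eventually.of_forall fun ω => by
      rw [Real.norm_eq_abs]; exact phiE_abs_le _)
  set S : Set ℝ := {r : ℝ | ∃ u : ℕ → Ω → EReal, (∀ n, u n ∈ X) ∧
      r = ∫ ω, phiE (⨅ n, u n ω) ∂ν} with hS
  have hSne : S.Nonempty := ⟨_, fun _ => f₀, fun _ => hf₀, rfl⟩
  have hlow : ∀ r ∈ S, -2 * (ν Set.univ).toReal ≤ r := by
    rintro r ⟨u, huX, rfl⟩
    have hwmeas : Measurable fun ω => ⨅ n, u n ω := Measurable.iInf fun n => hmeas _ (huX n)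
    calc -2 * (ν Set.univ).toReal = ∫ _, (-2 : ℝ) ∂ν := by
          rw [integral_const, smul_eq_mul, mul_comm]; rfl
      _ ≤ _ := integral_mono (integrable_const _) (hint _ hwmeas)
          (fun ω => (abs_le.mp (phiE_abs_le _)).1)
  have hbdd : BddBelow S := ⟨_, hlow⟩
  set c := sInf S with hc
  have hex : ∀ k : ℕ, ∃ u : ℕ → Ω → EReal, (∀ n, u n ∈ X) ∧
      (∫ ω, phiE (⨅ n, u n ω) ∂ν) < c + 1 / (k + 1) := by
    intro k
    obtain ⟨r, hrS, hrlt⟩ := exists_lt_of_csInf_lt hSne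
      (show sInf S < c + 1 / (k + 1) by
        have : (0:ℝ) < 1 / (k + 1) := by positivity
        linarith)
    obtain ⟨u, huX, rfl⟩ := hrS
    exact ⟨u, huX, hrlt⟩
  choose u huX hult using hex
  set D : ℕ → Ω → EReal := fun m => u m.unpair.1 m.unpair.2 with hD
  have hDX : ∀ n, D n ∈ X := fun n => huX _ _
  set w : Ω → EReal := fun ω => ⨅ m, D m ω with hw
  have hwmeas : Measurable w := Measurable.iInf fun m => hmeas _ (hDX m)
  have hwle : ∀ k ω, w ω ≤ ⨅ n, u k n ω := by
    intro k ω
    refine le_iInf fun n => (iInf_le _ (Nat.pair k n)).trans ?_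
    simp [hD, Nat.unpair_pair]
  have hwS : (∫ ω, phiE (w ω) ∂ν) ∈ S := ⟨D, hDX, rfl⟩
  have hcw : (∫ ω, phiE (w ω) ∂ν) = c := by
    refine le_antisymm ?_ (csInf_le hbdd hwS)
    refine le_of_forall_pos_le_add fun ε hε => ?_
    obtain ⟨k, hk⟩ := exists_nat_one_div_lt hε
    have hmono : (∫ ω, phiE (w ω) ∂ν) ≤ ∫ ω, phiE (⨅ n, u k n ω) ∂ν :=
      integral_mono (hint _ hwmeas)
        (hint _ (Measurable.iInf fun n => hmeas _ (huX k n)))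
        (fun ω => (phiE_strictMono.monotone (hwle k ω)))
    exact (lt_of_le_of_lt hmono ((hult k).trans_le (by push_cast; linarith))).le
  refine ⟨D, hDX, fun f hf => ?_⟩
  -- define w' = min w f as an infimum over a sequence
  set D' : ℕ → Ω → EReal := fun m => Nat.rec f (fun n _ => D n) m with hD'
  have hD'X : ∀ n, D' n ∈ X := by
    intro n
    cases n with
    | zero => exact hf
    | succ n => exact hDX n
  have hw' : ∀ ω, (⨅ m, D' m ω) = w ω ⊓ f ω := by
    intro ω
    refine le_antisymm (le_inf (le_iInf fun m => (iInf_le _ (m + 1))) (iInf_le _ 0)) ?_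
    refine le_iInf fun m => ?_
    cases m with
    | zero => exact inf_le_right
    | succ m => exact inf_le_left.trans (iInf_le _ m)
  have hw'meas : Measurable fun ω => ⨅ m, D' m ω := Measurable.iInf fun m => hmeas _ (hD'X m)
  have hmem' : (∫ ω, phiE (⨅ m, D' m ω) ∂ν) ∈ S := ⟨D', hD'X, rfl⟩
  have hle1 : (∫ ω, phiE (⨅ m, D' m ω) ∂ν) ≤ ∫ ω, phiE (w ω) ∂ν :=
    integral_mono (hint _ hw'meas) (hint _ hwmeas)
      (fun ω => phiE_strictMono.monotone (by rw [hw' ω]; exact inf_le_left))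
  have heq : (∫ ω, phiE (⨅ m, D' m ω) ∂ν) = ∫ ω, phiE (w ω) ∂ν :=
    le_antisymm hle1 (hcw ▸ csInf_le hbdd hmem')
  have hzero : (∫ ω, (phiE (w ω) - phiE (⨅ m, D' m ω)) ∂ν) = 0 := by
    rw [integral_sub (hint _ hwmeas) (hint _ hw'meas), heq, sub_self]
  have hae : (fun ω => phiE (w ω) - phiE (⨅ m, D' m ω)) =ᵐ[ν] 0 := by
    refine (integral_eq_zero_iff_of_nonneg ?_ ?_).mp hzero
    · intro ω
      simp only [Pi.zero_apply, sub_nonneg]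
      exact phiE_strictMono.monotone (by rw [hw' ω]; exact inf_le_left)
    · exact (hint _ hwmeas).sub (hint _ hw'meas)
  refine hae.mono fun ω hω => ?_
  have : phiE (w ω) = phiE (⨅ m, D' m ω) := by
    simpa [sub_eq_zero] using hω
  have hweq : w ω = ⨅ m, D' m ω := phiE_strictMono.injective this
  rw [hw' ω] at hweq
  calc w ω = w ω ⊓ f ω := hweq
    _ ≤ f ω := inf_le_right

/-- Interchange between minimization and the extended Lebesgue integral on `L¹_⊕`. -/
theorem interchange_extInt (μ : Measure Ω) [SigmaFinite μ]
    (X : Set (Ω → EReal)) (hXne : X.Nonempty)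
    (hmeas : ∀ f ∈ X, Measurable f)
    (hL1 : ∀ f ∈ X, (∫⁻ ω, (f ω).posE ∂μ) < ⊤)
    (g : Ω → EReal) (hg : Measurable g)
    (hlb : ∀ f ∈ X, g ≤ᵐ[μ] f)
    (hglb : ∀ h : Ω → EReal, Measurable h → (∀ f ∈ X, h ≤ᵐ[μ] f) → h ≤ᵐ[μ] g) :
    (∫⁻ ω, (g ω).posE ∂μ) < ⊤ ∧
    ((⨅ f ∈ X, extInt μ f) = extInt μ g ↔
      ∀ (s : Finset (Ω → EReal)) (hs : s.Nonempty), ↑s ⊆ X →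
        (⨅ f ∈ X, extInt μ f) ≤ extInt μ fun ω => s.inf' hs fun f => f ω) := by

  classical
  obtain ⟨f₀, hf₀⟩ := hXne
  have hgfin : (∫⁻ ω, (g ω).posE ∂μ) < ⊤ :=
    lt_of_le_of_lt (lintegral_mono_ae ((hlb f₀ hf₀).mono fun ω h => posE_mono h)) (hL1 f₀ hf₀)
  refine ⟨hgfin, ?_⟩
  have hgle : extInt μ g ≤ ⨅ f ∈ X, extInt μ f :=
    le_iInf₂ fun f hf => extInt_mono_ae (hlb f hf)
  constructor
  · intro hEq s hs hsX
    have hgs : g ≤ᵐ[μ] fun ω => s.inf' hs fun f => f ω := by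
      have hall : ∀ᵐ ω ∂μ, ∀ f ∈ s, g ω ≤ f ω :=
        (ae_ball_iff s.countable_toSet).mpr fun f hf => hlb f (hsX hf)
      exact hall.mono fun ω hω => Finset.le_inf' hs _ fun f hf => hω f hf
    rw [hEq]
    exact extInt_mono_ae hgs
  · intro hdir
    refine le_antisymm ?_ hgle
    obtain ⟨D, hDX, hDlb⟩ := exists_seq_ae_lb μ.toFinite X f₀ hf₀ hmeas
    set w : Ω → EReal := fun ω => ⨅ n, D n ω with hwdef
    have hwmeas : Measurable w := Measurable.iInf fun n => hmeas _ (hDX n)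
    have hwlb : ∀ f ∈ X, w ≤ᵐ[μ] f := by
      intro f hf
      have h1 := hDlb f hf
      rw [EventuallyLE, ae_toFinite] at h1
      exact h1
    have hwg : w ≤ᵐ[μ] g := hglb w hwmeas hwlb
    have hgw : g ≤ᵐ[μ] w := by
      have hall : ∀ᵐ ω ∂μ, ∀ n, g ω ≤ D n ω := ae_all_iff.mpr fun n => hlb _ (hDX n)
      exact hall.mono fun ω hω => le_iInf hω
    have hweq : w =ᵐ[μ] g := hwg.antisymm hgw
    set h : ℕ → Ω → EReal := fun n ω => ⨅ j : Fin (n + 1), D j ω with hhdef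
    have hhmeas : ∀ n, Measurable (h n) := fun n => Measurable.iInf fun j => hmeas _ (hDX j)
    have hhanti : Antitone h := by
      intro n m hnm ω
      exact le_iInf fun j => iInf_le _ (⟨j.1, by omega⟩ : Fin (m + 1))
    have hfinset : ∀ n, (⨅ f ∈ X, extInt μ f) ≤ extInt μ (h n) := by
      intro n
      have hsne : ((Finset.range (n + 1)).image D).Nonempty :=
        ⟨D 0, Finset.mem_image.mpr ⟨0, by simp, rfl⟩⟩
      have hsX : ↑((Finset.range (n + 1)).image D) ⊆ X := by
        intro f hf
        simp only [Finset.coe_image, Set.mem_image] at hf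
        obtain ⟨j, _, rfl⟩ := hf
        exact hDX j
      have hd := hdir _ hsne hsX
      have heq : (fun ω => ((Finset.range (n + 1)).image D).inf' hsne fun f => f ω) = h n := by
        funext ω
        refine le_antisymm (le_iInf fun j => Finset.inf'_le _ ?_) ?_
        · exact Finset.mem_image.mpr ⟨j.1, Finset.mem_range.mpr j.isLt, rfl⟩
        · refine Finset.le_inf' _ _ fun f hf => ?_
          obtain ⟨j, hj, rfl⟩ := Finset.mem_image.mp hf
          exact iInf_le _ (⟨j, Finset.mem_range.mp hj⟩ : Fin (n + 1))
      rwa [heq] at hd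
    have hinfh : (fun ω => ⨅ n, h n ω) = w := by
      funext ω
      refine le_antisymm
        (le_iInf fun m => (iInf_le _ m).trans (iInf_le _ (⟨m, by omega⟩ : Fin (m + 1))))
        (le_iInf fun n => le_iInf fun j => iInf_le _ (j : ℕ))
    have hfin0 : (∫⁻ ω, (h 0 ω).posE ∂μ) ≠ ⊤ := by
      refine ne_of_lt (lt_of_le_of_lt ?_ (hL1 (D 0) (hDX 0)))
      refine lintegral_mono fun ω => posE_mono ?_
      exact iInf_le _ (0 : Fin 1)
    calc (⨅ f ∈ X, extInt μ f) ≤ ⨅ n, extInt μ (h n) := le_iInf hfinset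
      _ ≤ extInt μ (fun ω => ⨅ n, h n ω) := iInf_extInt_le μ h hhmeas hhanti hfin0
      _ = extInt μ w := by rw [hinfh]
      _ = extInt μ g := extInt_congr_ae hweq


end
end

section
/- Let (Ω, F, μ) be a σ-finite measure space. For every measurable function f : Ω → ℝ̄, the outer integral ∫*_Ω f dμ := inf{ ∫_Ω ψ dμ : ψ ∈ L¹(Ω; ℝ), f ≤ ψ μ-a.e. } satisfies ∫*_Ω f dμ = ∫_Ω f₊ dμ ⊕' (−∫_Ω f₋ dμ), where ⊕' is the extended addition on ℝ̄ for which +∞ is absorbing (so (+∞) ⊕' (−∞) = +∞). In particular, when f is semi-integrable (∫f₊ dμ < ∞ or ∫f₋ dμ < ∞), the outer integral coincides with the extended Lebesgue integral. -/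
open MeasureTheory Filter Topology ENNReal

noncomputable section

variable {Ω : Type*} [MeasurableSpace Ω]

namespace EReal

lemma posE_eq_top_iff {x : EReal} : x.posE = ⊤ ↔ x = ⊤ := by
  unfold posE; split <;> simp_all [ENNReal.ofReal_ne_top]

lemma le_coe_posE (x : EReal) : x ≤ (x.posE : EReal) := by
  unfold posE
  split
  · simp_all
  · rw [coe_ennreal_ofReal]
    rcases eq_or_ne x ⊥ with h | h
    · simp [h]
    · exact (le_coe_toReal ‹_›).trans (by exact_mod_cast le_max_left _ _)

lemma posE_le_ofReal {x : EReal} {r : ℝ} (h : x ≤ (r : EReal)) :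
    x.posE ≤ ENNReal.ofReal r := by
  unfold posE
  split
  · simp_all
  · rcases eq_or_ne x ⊥ with hb | hb
    · simp [hb]
    · exact ENNReal.ofReal_le_ofReal (toReal_le_toReal h hb (coe_ne_top r))

lemma measurable_posE : Measurable EReal.posE := by
  unfold posE
  exact Measurable.ite (by simp) measurable_const
    (ENNReal.measurable_ofReal.comp measurable_ereal_toReal)

lemma eq_bot_of_forall_le {x : EReal} (h : ∀ c : ℝ, x ≤ (c : EReal)) : x = ⊥ := by
  induction x using EReal.rec with
  | bot => rfl
  | coe r => exact absurd (h (r - 1)) (by exact_mod_cast by linarith)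
  | top => exact absurd (h 0) (by simp)

end EReal

lemma ennnorm_eq_ofReal_add (r : ℝ) :
    (‖r‖₊ : ℝ≥0∞) = ENNReal.ofReal r + ENNReal.ofReal (-r) := by
  rcases le_total 0 r with h | h
  · rw [← enorm_eq_nnnorm, ← ofReal_norm, Real.norm_eq_abs, abs_of_nonneg h,
      ENNReal.ofReal_of_nonpos (neg_nonpos.mpr h), add_zero]
  · rw [← enorm_eq_nnnorm, ← ofReal_norm, Real.norm_eq_abs, abs_of_nonpos h,
      ENNReal.ofReal_of_nonpos h, zero_add]

lemma lintegral_posE_lt_top_of_majorant {μ : Measure Ω} {f : Ω → EReal} {ψ : Ω → ℝ}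
    (hψ : Integrable ψ μ) (hle : ∀ᵐ ω ∂μ, f ω ≤ (ψ ω : EReal)) :
    ∫⁻ ω, (f ω).posE ∂μ < ⊤ := by
  have hb : ∫⁻ ω, (f ω).posE ∂μ ≤ ∫⁻ ω, (‖ψ ω‖₊ : ℝ≥0∞) ∂μ := by
    apply lintegral_mono_ae
    filter_upwards [hle] with ω h
    calc (f ω).posE ≤ ENNReal.ofReal (ψ ω) := EReal.posE_le_ofReal h
      _ ≤ (‖ψ ω‖₊ : ℝ≥0∞) := by
          rw [← enorm_eq_nnnorm, ← ofReal_norm, Real.norm_eq_abs]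
          exact ENNReal.ofReal_le_ofReal (le_abs_self _)
  exact hb.trans_lt hψ.2

/-- The case where both positive and negative part have finite integral. -/
lemma outerInt_of_fin {μ : Measure Ω} {f : Ω → EReal} (hf : Measurable f)
    (hA : ∫⁻ ω, (f ω).posE ∂μ ≠ ⊤) (hB : ∫⁻ ω, (-(f ω)).posE ∂μ ≠ ⊤) :
    outerInt μ f = (((∫⁻ ω, (f ω).posE ∂μ).toReal
      - (∫⁻ ω, (-(f ω)).posE ∂μ).toReal : ℝ) : EReal) := by
  have hmA : Measurable fun ω => (f ω).posE := EReal.measurable_posE.comp hf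
  have hmB : Measurable fun ω => (-(f ω)).posE := EReal.measurable_posE.comp hf.neg
  have h_top : ∀ᵐ ω ∂μ, f ω ≠ ⊤ := by
    filter_upwards [ae_lt_top hmA (by exact hA)] with ω h ht
    exact absurd (EReal.posE_eq_top_iff.mpr ht) h.ne
  have h_bot : ∀ᵐ ω ∂μ, f ω ≠ ⊥ := by
    filter_upwards [ae_lt_top hmB (by exact hB)] with ω h ht
    exact absurd (EReal.posE_eq_top_iff.mpr (by rw [ht]; rfl)) h.ne
  set g : Ω → ℝ := fun ω => (f ω).toReal with hg
  have hgm : Measurable g := hf.ereal_toReal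
  have hcp : (fun ω => ENNReal.ofReal (g ω)) =ᵐ[μ] fun ω => (f ω).posE := by
    filter_upwards [h_top] with ω h
    simp only [hg, EReal.posE, if_neg h]
  have hcn : (fun ω => ENNReal.ofReal (-g ω)) =ᵐ[μ] fun ω => (-(f ω)).posE := by
    filter_upwards [h_bot] with ω h
    have hne : ¬(-(f ω) = ⊤) := fun hh => h (EReal.neg_eq_top_iff.mp hh)
    simp only [hg, EReal.posE, if_neg hne, EReal.toReal_neg_eq]
  have hfin : HasFiniteIntegral g μ := by
    have hnn : (fun ω => (‖g ω‖₊ : ℝ≥0∞))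
        = fun ω => ENNReal.ofReal (g ω) + ENNReal.ofReal (-g ω) :=
      funext fun ω => ennnorm_eq_ofReal_add (g ω)
    show ∫⁻ ω, (‖g ω‖₊ : ℝ≥0∞) ∂μ < ⊤
    rw [hnn, lintegral_add_left hgm.ennreal_ofReal,
      lintegral_congr_ae hcp, lintegral_congr_ae hcn]
    exact ENNReal.add_lt_top.mpr ⟨hA.lt_top, hB.lt_top⟩
  have hg_int : Integrable g μ := ⟨hgm.aestronglyMeasurable, hfin⟩
  have hval : ∫ ω, g ω ∂μ = (∫⁻ ω, (f ω).posE ∂μ).toReal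
      - (∫⁻ ω, (-(f ω)).posE ∂μ).toReal := by
    rw [integral_eq_lintegral_pos_part_sub_lintegral_neg_part hg_int,
      lintegral_congr_ae hcp, lintegral_congr_ae hcn]
  have hmem : ((∫ ω, g ω ∂μ : ℝ) : EReal) ∈
      { y : EReal | ∃ ψ : Ω → ℝ, Integrable ψ μ ∧ (∀ᵐ ω ∂μ, f ω ≤ (ψ ω : EReal)) ∧
        y = ((∫ ω, ψ ω ∂μ : ℝ) : EReal) } := by
    refine ⟨g, hg_int, ?_, rfl⟩
    filter_upwards [h_top, h_bot] with ω h1 h2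
    exact le_of_eq (EReal.coe_toReal h1 h2).symm
  have : outerInt μ f = ((∫ ω, g ω ∂μ : ℝ) : EReal) := by
    refine le_antisymm (sInf_le hmem) (le_sInf ?_)
    rintro y ⟨ψ, hψi, hψle, rfl⟩
    have hgψ : g ≤ᵐ[μ] ψ := by
      filter_upwards [h_top, h_bot, hψle] with ω h1 h2 h3
      have : ((g ω : ℝ) : EReal) ≤ (ψ ω : EReal) := by
        rw [hg]; rw [EReal.coe_toReal h1 h2]; exact h3
      exact_mod_cast this
    exact_mod_cast integral_mono_ae hg_int hψi hgψ
  rw [this, hval]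

/-- The case where the positive part is finite but the negative part infinite. -/
lemma outerInt_of_neg_infinite {μ : Measure Ω} [SigmaFinite μ] {f : Ω → EReal}
    (hf : Measurable f) (hA : ∫⁻ ω, (f ω).posE ∂μ ≠ ⊤)
    (hB : ∫⁻ ω, (-(f ω)).posE ∂μ = ⊤) : outerInt μ f = ⊥ := by
  set p : Ω → ℝ≥0∞ := fun ω => (f ω).posE with hp
  set n : Ω → ℝ≥0∞ := fun ω => (-(f ω)).posE with hn
  have hpm : Measurable p := EReal.measurable_posE.comp hf
  have hnm : Measurable n := EReal.measurable_posE.comp hf.neg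
  have h_top : ∀ᵐ ω ∂μ, f ω ≠ ⊤ := by
    filter_upwards [ae_lt_top hpm (by exact hA)] with ω h ht
    exact absurd (EReal.posE_eq_top_iff.mpr ht) h.ne
  set P : Ω → ℝ := fun ω => (p ω).toReal with hP
  have hPm : Measurable P := hpm.ennreal_toReal
  have hP_int : Integrable P μ := by
    refine ⟨hPm.aestronglyMeasurable, ?_⟩
    show ∫⁻ ω, (‖P ω‖₊ : ℝ≥0∞) ∂μ < ⊤
    have hb : ∀ ω, (‖P ω‖₊ : ℝ≥0∞) ≤ p ω := fun ω => by
      rw [← enorm_eq_nnnorm, ← ofReal_norm, Real.norm_eq_abs, abs_of_nonneg ENNReal.toReal_nonneg]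
      exact ENNReal.ofReal_toReal_le
    exact (lintegral_mono hb).trans_lt hA.lt_top
  -- truncations of n
  set gk : ℕ → Ω → ℝ≥0∞ :=
    fun k => (spanningSets μ k).indicator (fun ω => min (n ω) k) with hgk
  have hgkm : ∀ k, Measurable (gk k) :=
    fun k => (hnm.min measurable_const).indicator (measurableSet_spanningSets μ k)
  have hgk_le_n : ∀ k ω, gk k ω ≤ n ω := by
    intro k ω
    by_cases hω : ω ∈ spanningSets μ k
    · simp only [hgk]; rw [Set.indicator_of_mem hω]; exact min_le_left _ _
    · simp only [hgk]; rw [Set.indicator_of_notMem hω]; exact zero_le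
  have hgk_le_k : ∀ k ω, gk k ω ≤ (k : ℝ≥0∞) := by
    intro k ω
    by_cases hω : ω ∈ spanningSets μ k
    · simp only [hgk]; rw [Set.indicator_of_mem hω]; exact min_le_right _ _
    · simp only [hgk]; rw [Set.indicator_of_notMem hω]; exact zero_le
  have hgk_lt : ∀ k, ∫⁻ ω, gk k ω ∂μ < ⊤ := by
    intro k
    have hle : ∫⁻ ω, gk k ω ∂μ ≤ (k : ℝ≥0∞) * μ (spanningSets μ k) := by
      rw [← setLIntegral_const (spanningSets μ k) (k : ℝ≥0∞)]
      rw [hgk, lintegral_indicator (measurableSet_spanningSets μ k)]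
      exact lintegral_mono fun ω => min_le_right _ _
    exact hle.trans_lt (ENNReal.mul_lt_top (by simp) (measure_spanningSets_lt_top μ k))
  have hmono : Monotone gk := by
    intro j k hjk ω
    by_cases hω : ω ∈ spanningSets μ j
    · simp only [hgk]
      rw [Set.indicator_of_mem hω, Set.indicator_of_mem (spanningSets_mono hjk hω)]
      exact min_le_min le_rfl (by exact_mod_cast hjk)
    · simp only [hgk]; rw [Set.indicator_of_notMem hω]; exact zero_le
  have hsup : ∀ ω, ⨆ k, gk k ω = n ω := by
    intro ω
    refine le_antisymm (iSup_le fun k => hgk_le_n k ω) ?_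
    obtain ⟨k0, hk0⟩ : ∃ k0, ω ∈ spanningSets μ k0 := ⟨_, mem_spanningSetsIndex μ ω⟩
    have h1 : n ω = ⨆ k : ℕ, n ω ⊓ (k : ℝ≥0∞) := by
      rw [← inf_iSup_eq, ENNReal.iSup_natCast, inf_top_eq]
    rw [h1]
    refine iSup_le fun k => le_iSup_of_le (max k k0) ?_
    have hmem : ω ∈ spanningSets μ (max k k0) :=
      spanningSets_mono (le_max_right _ _) hk0
    simp only [hgk]; rw [Set.indicator_of_mem hmem]
    exact inf_le_inf_left _ (by exact_mod_cast le_max_left k k0)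
  have hBsup : ⨆ k, ∫⁻ ω, gk k ω ∂μ = ⊤ := by
    rw [← lintegral_iSup hgkm hmono]
    rw [lintegral_congr fun ω => hsup ω]
    exact hB
  -- conclude: outerInt ≤ c for every real c
  have key : ∀ c : ℝ, outerInt μ f ≤ (c : EReal) := by
    intro c
    obtain ⟨k, hk⟩ : ∃ k, ENNReal.ofReal ((∫ ω, P ω ∂μ) - c) < ∫⁻ ω, gk k ω ∂μ := by
      apply lt_iSup_iff.mp
      rw [hBsup]
      exact ENNReal.ofReal_lt_top
    set Nk : Ω → ℝ := fun ω => (gk k ω).toReal with hNk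
    have hNkm : Measurable Nk := (hgkm k).ennreal_toReal
    have hNk_int : Integrable Nk μ := by
      refine ⟨hNkm.aestronglyMeasurable, ?_⟩
      show ∫⁻ ω, (‖Nk ω‖₊ : ℝ≥0∞) ∂μ < ⊤
      have hb : ∀ ω, (‖Nk ω‖₊ : ℝ≥0∞) ≤ gk k ω := fun ω => by
        rw [← enorm_eq_nnnorm, ← ofReal_norm, Real.norm_eq_abs, abs_of_nonneg ENNReal.toReal_nonneg]
        exact ENNReal.ofReal_toReal_le
      exact (lintegral_mono hb).trans_lt (hgk_lt k)
    have hNk_val : ∫ ω, Nk ω ∂μ = (∫⁻ ω, gk k ω ∂μ).toReal :=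
      integral_toReal (hgkm k).aemeasurable
        (ae_of_all _ fun ω => (hgk_le_k k ω).trans_lt (ENNReal.natCast_lt_top k))
    set ψ : Ω → ℝ := fun ω => P ω - Nk ω with hψ
    have hψ_int : Integrable ψ μ := hP_int.sub hNk_int
    have hψ_maj : ∀ᵐ ω ∂μ, f ω ≤ (ψ ω : EReal) := by
      filter_upwards [h_top] with ω hω
      rcases eq_or_ne (f ω) ⊥ with hb | hb
      · rw [hb]; exact bot_le
      · set r : ℝ := (f ω).toReal with hr
        have hfr : ((r : ℝ) : EReal) = f ω := EReal.coe_toReal hω hb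
        have hPω : P ω = max r 0 := by
          rw [hP]; simp only [hp, EReal.posE, if_neg hω]
          exact ENNReal.toReal_ofReal'
        have hnω : n ω = ENNReal.ofReal (-r) := by
          rw [hn]
          have hne : ¬(-(f ω) = ⊤) := fun hh => hb (EReal.neg_eq_top_iff.mp hh)
          simp only [EReal.posE, if_neg hne, EReal.toReal_neg_eq, hr]
        have hNle : Nk ω ≤ max (-r) 0 := by
          rw [hNk]
          calc (gk k ω).toReal ≤ (ENNReal.ofReal (-r)).toReal :=
                ENNReal.toReal_mono ENNReal.ofReal_ne_top (hnω ▸ hgk_le_n k ω)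
            _ = max (-r) 0 := ENNReal.toReal_ofReal'
        have hkey : r ≤ ψ ω := by
          have h2 : max r 0 - max (-r) 0 = r := by
            rcases le_total 0 r with h | h
            · rw [max_eq_left h, max_eq_right (by linarith), sub_zero]
            · rw [max_eq_right h, max_eq_left (by linarith)]; ring
          rw [hψ]; dsimp only; rw [hPω]
          linarith
        calc f ω = ((r : ℝ) : EReal) := hfr.symm
          _ ≤ (ψ ω : EReal) := by exact_mod_cast hkey
    have hψ_val : ∫ ω, ψ ω ∂μ < c := by
      have h1 : (∫ ω, P ω ∂μ) - c ≤ (ENNReal.ofReal ((∫ ω, P ω ∂μ) - c)).toReal := by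
        rw [ENNReal.toReal_ofReal']; exact le_max_left _ _
      have h2 : (ENNReal.ofReal ((∫ ω, P ω ∂μ) - c)).toReal < (∫⁻ ω, gk k ω ∂μ).toReal :=
        (ENNReal.toReal_lt_toReal ENNReal.ofReal_ne_top (hgk_lt k).ne).mpr hk
      rw [hψ, integral_sub hP_int hNk_int, hNk_val]
      linarith
    calc outerInt μ f ≤ ((∫ ω, ψ ω ∂μ : ℝ) : EReal) := sInf_le ⟨ψ, hψ_int, hψ_maj, rfl⟩
      _ ≤ (c : EReal) := by exact_mod_cast hψ_val.le
  exact EReal.eq_bot_of_forall_le key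

/-- The outer integral equals `∫f₊ ⊕' (−∫f₋)` where `⊕'` is the `+∞`-absorbing
addition; in particular it coincides with the extended Lebesgue integral on
semi-integrable functions. -/
theorem outerInt_eq (μ : Measure Ω) [SigmaFinite μ]
    (f : Ω → EReal) (hf : Measurable f) :
    outerInt μ f =
      upperAdd ((∫⁻ ω, (f ω).posE ∂μ : ℝ≥0∞) : EReal)
        (-((∫⁻ ω, (-(f ω)).posE ∂μ : ℝ≥0∞) : EReal)) ∧
    (((∫⁻ ω, (f ω).posE ∂μ) < ⊤ ∨ (∫⁻ ω, (-(f ω)).posE ∂μ) < ⊤) →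
      outerInt μ f = extInt μ f) := by
  set A := ∫⁻ ω, (f ω).posE ∂μ with hAdef
  set B := ∫⁻ ω, (-(f ω)).posE ∂μ with hBdef
  have main : outerInt μ f = upperAdd (A : EReal) (-(B : EReal)) := by
    by_cases hA : A = ⊤
    · have hS : { y : EReal | ∃ ψ : Ω → ℝ, Integrable ψ μ ∧ (∀ᵐ ω ∂μ, f ω ≤ (ψ ω : EReal)) ∧
          y = ((∫ ω, ψ ω ∂μ : ℝ) : EReal) } = ∅ := by
        ext y
        simp only [Set.mem_setOf_eq, Set.mem_empty_iff_false, iff_false, not_exists]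
        rintro ψ ⟨hψi, hψle, rfl⟩
        exact absurd hA (lintegral_posE_lt_top_of_majorant hψi hψle).ne
      rw [outerInt, hS, sInf_empty, upperAdd,
        if_pos (Or.inl (by rw [hA]; exact EReal.coe_ennreal_top))]
    · by_cases hB : B = ⊤
      · rw [outerInt_of_neg_infinite hf hA hB, upperAdd, if_neg, hB,
          EReal.coe_ennreal_top]
        · exact (EReal.add_bot _).symm
        · push_neg
          refine ⟨fun hh => hA (EReal.coe_ennreal_eq_top_iff.mp hh), ?_⟩
          rw [hB, EReal.coe_ennreal_top]; simp
      · rw [outerInt_of_fin hf hA hB, upperAdd, if_neg]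
        · have hAc : (A : EReal) = ((A.toReal : ℝ) : EReal) := by
            conv_lhs => rw [← EReal.coe_toReal (x := (A : EReal))
              (fun hh => hA (EReal.coe_ennreal_eq_top_iff.mp hh)) (EReal.coe_ennreal_ne_bot _)]
            rw [EReal.toReal_coe_ennreal]
          have hBc : (B : EReal) = ((B.toReal : ℝ) : EReal) := by
            conv_lhs => rw [← EReal.coe_toReal (x := (B : EReal))
              (fun hh => hB (EReal.coe_ennreal_eq_top_iff.mp hh)) (EReal.coe_ennreal_ne_bot _)]
            rw [EReal.toReal_coe_ennreal]
          rw [hAc, hBc, ← EReal.coe_neg, ← EReal.coe_add]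
          norm_num [sub_eq_add_neg]
          rw [← hAdef, ← hBdef]
        · push_neg
          exact ⟨fun hh => hA (EReal.coe_ennreal_eq_top_iff.mp hh),
            fun hh => EReal.coe_ennreal_ne_bot B (EReal.neg_eq_top_iff.mp hh)⟩
  refine ⟨main, fun h => ?_⟩
  rw [main, extInt, ← hAdef, ← hBdef, sub_eq_add_neg]
  by_cases hA : A = ⊤
  · have hB : B ≠ ⊤ := by
      rcases h with h | h
      · exact absurd hA h.ne
      · exact h.ne
    rw [upperAdd, if_pos (Or.inl (by rw [hA]; exact EReal.coe_ennreal_top)), hA,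
      EReal.coe_ennreal_top]
    exact (EReal.top_add_of_ne_bot
      (fun hh => hB (EReal.coe_ennreal_eq_top_iff.mp (EReal.neg_eq_bot_iff.mp hh)))).symm
  · rw [upperAdd, if_neg]
    push_neg
    exact ⟨fun hh => hA (EReal.coe_ennreal_eq_top_iff.mp hh),
      fun hh => EReal.coe_ennreal_ne_bot B (EReal.neg_eq_top_iff.mp hh)⟩

end
end
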